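/- Let H ∈ (0, 1), σ > 0, K ≥ 1, and let a = (a_0, …, a_K) be real numbers, not all zero, with Σ_{k=0}^{K} a_k = 0. Let a² = (a²_0, …, a²_{2K}) be the dilated sequence defined by a²_{2k′} = a_{k′} and a²_k = 0 for odd k. Let v : [0, ∞) → ℝ be any function satisfying v(t) = (σ²/2)·t^{2H} + o(t^{2H}) as t → 0⁺, and set Q_a(Δ) = Σ_{k=0}^{K} Σ_{ℓ=0}^{K} a_k a_ℓ v(|k−ℓ|·Δ) and Q_{a²}(Δ) = Σ_{k=0}^{2K} Σ_{ℓ=0}^{2K} a²_k a²_ℓ v(|k−ℓ|·Δ). Then Q_{a²}(Δ) = Q_a(2Δ) for every Δ > 0, the quantities Q_a(Δ) and Q_{a²}(Δ) are nonzero for all sufficiently small Δ > 0, and lim_{Δ → 0⁺} (1/2) log₂ ( Q_{a²}(Δ) / Q_a(Δ) ) = H. -/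

import Mathlib

open Real Filter Asymptotics Finset

section HurstAux

open MeasureTheory Set

lemma hurst_aux_int {H : ℝ} (h0 : 0 < H) (h1 : H < 1) {c : ℝ} (hc : 0 < c) :
    MeasureTheory.IntegrableOn
      (fun u : ℝ => (1 - Real.exp (-(c * u))) * u ^ (-1 - H)) (Set.Ioi 0) := by
  have hcont : ∀ u : ℝ, u ≠ 0 →
      ContinuousAt (fun u : ℝ => (1 - Real.exp (-(c * u))) * u ^ (-1 - H)) u := by
    intro u hu
    exact (ContinuousAt.sub continuousAt_const (by fun_prop)).mul
      (Real.continuousAt_rpow_const u _ (Or.inl hu))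
  have hmeas : ∀ s : Set ℝ, s ⊆ Set.Ioi 0 → MeasurableSet s →
      MeasureTheory.AEStronglyMeasurable
        (fun u : ℝ => (1 - Real.exp (-(c * u))) * u ^ (-1 - H)) (volume.restrict s) := by
    intro s hs hsm
    exact ContinuousOn.aestronglyMeasurable
      (fun u hu => ((hcont u (ne_of_gt (hs hu))).continuousWithinAt)) hsm
  rw [← Set.Ioo_union_Ici_eq_Ioi (one_pos : (0:ℝ) < 1)]
  apply MeasureTheory.IntegrableOn.union
  · -- near 0 : bound by c * u^(-H)
    have hg : MeasureTheory.IntegrableOn (fun u : ℝ => c * u ^ (-H)) (Set.Ioo 0 1) := by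
      exact ((intervalIntegral.integrableOn_Ioo_rpow_iff one_pos).2 (by linarith)).const_mul c
    apply MeasureTheory.Integrable.mono' hg
      (hmeas _ (fun x hx => hx.1) measurableSet_Ioo)
    filter_upwards [MeasureTheory.ae_restrict_mem measurableSet_Ioo] with u hu
    have hu0 : 0 < u := hu.1
    have he1 : Real.exp (-(c * u)) ≤ 1 := Real.exp_le_one_iff.mpr (by nlinarith)
    have he2 : 1 - (c * u) ≤ Real.exp (-(c * u)) := by
      have := Real.add_one_le_exp (-(c * u)); linarith
    have hrp : (0:ℝ) ≤ u ^ (-1 - H) := (Real.rpow_pos_of_pos hu0 _).le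
    rw [Real.norm_eq_abs, abs_of_nonneg (by nlinarith)]
    have : (1 - Real.exp (-(c * u))) * u ^ (-1 - H) ≤ (c * u) * u ^ (-1 - H) := by
      nlinarith
    calc (1 - Real.exp (-(c * u))) * u ^ (-1 - H) ≤ c * (u * u ^ (-1 - H)) := by linarith [this]
      _ = c * u ^ (-H) := by
          rw [show u * u ^ (-1 - H) = u ^ (1:ℝ) * u ^ (-1 - H) by rw [Real.rpow_one],
            ← Real.rpow_add hu0]
          ring_nf
  · -- tail : bound by u^(-1-H)
    rw [integrableOn_Ici_iff_integrableOn_Ioi]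
    apply MeasureTheory.Integrable.mono'
      (integrableOn_Ioi_rpow_of_lt (by linarith : -1 - H < -1) one_pos)
      (hmeas _ (fun x hx => Set.mem_Ioi.mpr (lt_trans one_pos hx)) measurableSet_Ioi)
    filter_upwards [MeasureTheory.ae_restrict_mem measurableSet_Ioi] with u hu
    have hu0 : (0:ℝ) < u := lt_trans one_pos hu
    have he1 : Real.exp (-(c * u)) ≤ 1 := Real.exp_le_one_iff.mpr (by nlinarith)
    have he0 : 0 < Real.exp (-(c * u)) := Real.exp_pos _
    have hrp : (0:ℝ) ≤ u ^ (-1 - H) := (Real.rpow_pos_of_pos hu0 _).le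
    rw [Real.norm_eq_abs, abs_of_nonneg (by nlinarith)]
    nlinarith


lemma hurst_aux_base_int {H : ℝ} (h0 : 0 < H) (h1 : H < 1) :
    MeasureTheory.IntegrableOn
      (fun u : ℝ => (1 - Real.exp (-u)) * u ^ (-1 - H)) (Set.Ioi 0) := by
  have := hurst_aux_int h0 h1 (c := 1) one_pos
  simpa using this

lemma hurst_aux_base_pos {H : ℝ} (h0 : 0 < H) (h1 : H < 1) :
    0 < ∫ u in Set.Ioi (0:ℝ), (1 - Real.exp (-u)) * u ^ (-1 - H) := by
  rw [MeasureTheory.setIntegral_pos_iff_support_of_nonneg_ae _ (hurst_aux_base_int h0 h1)]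
  · have hsub : Set.Ioi (0:ℝ) ⊆
        Function.support (fun u : ℝ => (1 - Real.exp (-u)) * u ^ (-1 - H)) := by
      intro u hu
      have hu0 : (0:ℝ) < u := hu
      have h1' : Real.exp (-u) < 1 := Real.exp_lt_one_iff.mpr (by linarith)
      have h2' : (0:ℝ) < u ^ (-1 - H) := Real.rpow_pos_of_pos hu0 _
      have : 0 < (1 - Real.exp (-u)) * u ^ (-1 - H) := by nlinarith
      simpa using ne_of_gt this
    have : Function.support (fun u : ℝ => (1 - Real.exp (-u)) * u ^ (-1 - H)) ∩ Set.Ioi 0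
        = Set.Ioi 0 := Set.inter_eq_self_of_subset_right hsub
    rw [this, Real.volume_Ioi]
    exact ENNReal.zero_lt_top
  · filter_upwards [MeasureTheory.ae_restrict_mem measurableSet_Ioi] with u hu
    have hu0 : (0:ℝ) < u := hu
    have h1' : Real.exp (-u) ≤ 1 := Real.exp_le_one_iff.mpr (by linarith)
    have h2' : (0:ℝ) ≤ u ^ (-1 - H) := (Real.rpow_pos_of_pos hu0 _).le
    simp only [Pi.zero_apply]
    nlinarith

lemma hurst_aux_scaling {H : ℝ} (h0 : 0 < H) (h1 : H < 1) {c : ℝ} (hc : 0 < c) :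
    ∫ s in Set.Ioi (0:ℝ), (1 - Real.exp (-(c * s))) * s ^ (-1 - H)
      = c ^ H * ∫ u in Set.Ioi (0:ℝ), (1 - Real.exp (-u)) * u ^ (-1 - H) := by
  have key := MeasureTheory.integral_comp_mul_left_Ioi
    (fun u : ℝ => (1 - Real.exp (-u)) * u ^ (-1 - H)) 0 hc
  rw [mul_zero] at key
  have hone : c ^ (1 + H) * c ^ (-1 - H) = 1 := by
    rw [← Real.rpow_add hc]; norm_num
  have heq : Set.EqOn (fun s : ℝ => (1 - Real.exp (-(c * s))) * s ^ (-1 - H))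
      (fun s : ℝ => c ^ (1 + H) * ((1 - Real.exp (-(c * s))) * (c * s) ^ (-1 - H)))
      (Set.Ioi 0) := by
    intro s hs
    have hs0 : (0:ℝ) < s := hs
    simp only
    rw [Real.mul_rpow hc.le hs0.le]
    rw [show c ^ (1 + H) * ((1 - Real.exp (-(c * s))) * (c ^ (-1 - H) * s ^ (-1 - H)))
        = (c ^ (1 + H) * c ^ (-1 - H)) * ((1 - Real.exp (-(c * s))) * s ^ (-1 - H)) by ring,
      hone, one_mul]
  rw [MeasureTheory.setIntegral_congr_fun measurableSet_Ioi heq,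
    MeasureTheory.integral_const_mul, key, smul_eq_mul]
  rw [show c ^ (1 + H) * (c⁻¹ * ∫ u in Set.Ioi (0:ℝ), (1 - Real.exp (-u)) * u ^ (-1 - H))
      = (c ^ (1 + H) * c⁻¹) * ∫ u in Set.Ioi (0:ℝ), (1 - Real.exp (-u)) * u ^ (-1 - H) by ring]
  congr 1
  rw [← Real.rpow_neg_one c, ← Real.rpow_add hc]
  ring_nf

lemma hurst_aux_repr {H : ℝ} (h0 : 0 < H) (h1 : H < 1) {x : ℝ} (hx : 0 ≤ x) :
    ∫ s in Set.Ioi (0:ℝ), (1 - Real.exp (-(x ^ 2 * s))) * s ^ (-1 - H)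
      = x ^ (2 * H) * ∫ u in Set.Ioi (0:ℝ), (1 - Real.exp (-u)) * u ^ (-1 - H) := by
  rcases eq_or_lt_of_le hx with rfl | hx0
  · simp [Real.zero_rpow (by positivity : 2 * H ≠ 0)]
  · have hc : (0:ℝ) < x ^ 2 := by positivity
    rw [hurst_aux_scaling h0 h1 hc]
    congr 1
    rw [← Real.rpow_natCast x 2, ← Real.rpow_mul hx]
    norm_num [mul_comm]


lemma hurst_aux_S_neg {H : ℝ} (h0 : 0 < H) (h1 : H < 1) {K : ℕ} (a : ℕ → ℝ)
    (hzero : ∑ k ∈ Finset.range (K + 1), a k = 0)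
    (hne : ∃ k ∈ Finset.range (K + 1), a k ≠ 0) :
    ∑ k ∈ Finset.range (K + 1), ∑ l ∈ Finset.range (K + 1),
      a k * a l * |(k : ℝ) - (l : ℝ)| ^ (2 * H) < 0 := by
  classical
  rw [← Finset.sum_product']
  set P := Finset.range (K + 1) ×ˢ Finset.range (K + 1) with hP
  set I := ∫ u in Set.Ioi (0:ℝ), (1 - Real.exp (-u)) * u ^ (-1 - H) with hIdef
  have hIpos : 0 < I := hurst_aux_base_pos h0 h1
  set G : ℝ → ℝ := fun s => ∑ p ∈ P,
    a p.1 * a p.2 * Real.exp (-(((p.1 : ℝ) - (p.2 : ℝ)) ^ 2 * s)) with hG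
  set S : ℝ := ∑ p ∈ P, a p.1 * a p.2 * |(p.1 : ℝ) - (p.2 : ℝ)| ^ (2 * H) with hS
  show S < 0
  -- the double sum of `a k * a l` vanishes
  have hsum0 : ∑ p ∈ P, a p.1 * a p.2 = 0 := by
    have e : ∑ p ∈ P, a p.1 * a p.2
        = ∑ k ∈ Finset.range (K+1), ∑ l ∈ Finset.range (K+1), a k * a l :=
      Finset.sum_product _ _ _
    rw [e, ← Finset.sum_mul_sum (Finset.range (K+1)) (Finset.range (K+1)) a a, hzero, zero_mul]
  -- integrability of the elementary pieces
  have hint : ∀ d : ℝ, 0 ≤ d → MeasureTheory.IntegrableOn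
      (fun s : ℝ => (1 - Real.exp (-(d * s))) * s ^ (-1 - H)) (Set.Ioi 0) := by
    intro d hd
    rcases eq_or_lt_of_le hd with rfl | hd0
    · have : (fun s : ℝ => (1 - Real.exp (-(0 * s))) * s ^ (-1 - H)) = fun _ => (0:ℝ) := by
        funext s; simp
      rw [this]
      exact MeasureTheory.integrableOn_zero
    · exact hurst_aux_int h0 h1 hd0
  -- termwise integral representation
  have hterm : ∀ p ∈ P, a p.1 * a p.2 * |(p.1 : ℝ) - (p.2 : ℝ)| ^ (2 * H) * I
      = ∫ s in Set.Ioi (0:ℝ),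
        a p.1 * a p.2 * ((1 - Real.exp (-(((p.1 : ℝ) - (p.2 : ℝ)) ^ 2 * s))) * s ^ (-1 - H)) := by
    intro p _
    rw [MeasureTheory.integral_const_mul]
    have hrepr := hurst_aux_repr h0 h1 (abs_nonneg ((p.1 : ℝ) - (p.2 : ℝ)))
    rw [sq_abs] at hrepr
    rw [hrepr]
    ring
  have hSI : S * I = ∫ s in Set.Ioi (0:ℝ), ∑ p ∈ P,
      a p.1 * a p.2 * ((1 - Real.exp (-(((p.1 : ℝ) - (p.2 : ℝ)) ^ 2 * s))) * s ^ (-1 - H)) := by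
    rw [MeasureTheory.integral_finset_sum P
      (fun p _ => ((hint _ (sq_nonneg _)).const_mul _))]
    rw [hS, Finset.sum_mul]
    exact Finset.sum_congr rfl hterm
  -- rewrite the integrand using `G`
  have hneg : ∀ s ∈ Set.Ioi (0:ℝ), ∑ p ∈ P,
      a p.1 * a p.2 * ((1 - Real.exp (-(((p.1 : ℝ) - (p.2 : ℝ)) ^ 2 * s))) * s ^ (-1 - H))
      = -(G s * s ^ (-1 - H)) := by
    intro s _
    have hGs : G s = ∑ p ∈ P, a p.1 * a p.2 * Real.exp (-(((p.1 : ℝ) - (p.2 : ℝ)) ^ 2 * s)) := rfl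
    have e1 : ∑ p ∈ P,
        a p.1 * a p.2 * ((1 - Real.exp (-(((p.1 : ℝ) - (p.2 : ℝ)) ^ 2 * s))) * s ^ (-1 - H))
        = (∑ p ∈ P, (a p.1 * a p.2
            - a p.1 * a p.2 * Real.exp (-(((p.1 : ℝ) - (p.2 : ℝ)) ^ 2 * s)))) * s ^ (-1 - H) := by
      rw [Finset.sum_mul]
      exact Finset.sum_congr rfl fun p _ => by ring
    rw [e1, Finset.sum_sub_distrib, hsum0, ← hGs]
    ring
  rw [MeasureTheory.setIntegral_congr_fun measurableSet_Ioi hneg, MeasureTheory.integral_neg]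
    at hSI
  -- integrability of `G s * s ^ (-1-H)`
  have hGint : MeasureTheory.IntegrableOn (fun s : ℝ => G s * s ^ (-1 - H)) (Set.Ioi 0) := by
    have h2 : MeasureTheory.IntegrableOn (fun s : ℝ => -(∑ p ∈ P,
        a p.1 * a p.2 * ((1 - Real.exp (-(((p.1 : ℝ) - (p.2 : ℝ)) ^ 2 * s))) * s ^ (-1 - H))))
        (Set.Ioi 0) :=
      (MeasureTheory.integrable_finset_sum P
        (fun p _ => ((hint _ (sq_nonneg _)).const_mul _))).neg
    apply h2.congr_fun _ measurableSet_Ioi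
    intro s hs
    simp only [hneg s hs, neg_neg]
  -- nonnegativity of G on (0, ∞) via the exponential power series
  have hGnonneg : ∀ s : ℝ, 0 < s → 0 ≤ G s := by
    intro s hs
    have hexp : ∀ x : ℝ, Real.exp x = ∑' n : ℕ, x ^ n / (Nat.factorial n : ℝ) := by
      intro x
      rw [Real.exp_eq_exp_ℝ, NormedSpace.exp_eq_tsum_div]
    set c : ℕ → ℝ := fun k => a k * Real.exp (-((k : ℝ) ^ 2 * s)) with hc
    set F : ℕ × ℕ → ℕ → ℝ := fun p n =>
      (c p.1 * (p.1 : ℝ) ^ n) * (c p.2 * (p.2 : ℝ) ^ n) * ((2 * s) ^ n / (Nat.factorial n : ℝ)) with hF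
    have hFalt : ∀ p : ℕ × ℕ, F p = fun n =>
        (c p.1 * c p.2) * ((2 * s * (p.1 : ℝ) * (p.2 : ℝ)) ^ n / (Nat.factorial n : ℝ)) := by
      intro p; funext n
      simp only [hF]
      rw [mul_pow, mul_pow]
      ring
    have hFs : ∀ p : ℕ × ℕ, Summable (F p) := by
      intro p
      rw [hFalt p]
      exact (Real.summable_pow_div_factorial _).mul_left _
    have htermG : ∀ p : ℕ × ℕ,
        a p.1 * a p.2 * Real.exp (-(((p.1 : ℝ) - (p.2 : ℝ)) ^ 2 * s)) = ∑' n, F p n := by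
      intro p
      rw [show -(((p.1 : ℝ) - (p.2 : ℝ)) ^ 2 * s)
          = (-((p.1 : ℝ) ^ 2 * s)) + (-((p.2 : ℝ) ^ 2 * s)) + (2 * s * (p.1 : ℝ) * (p.2 : ℝ))
          by ring, Real.exp_add, Real.exp_add, hexp (2 * s * (p.1 : ℝ) * (p.2 : ℝ))]
      rw [hFalt p, tsum_mul_left]
      simp only [hc]
      ring
    have hGeq : G s = ∑' n : ℕ, ∑ p ∈ P, F p n := by
      have : G s = ∑ p ∈ P, ∑' n, F p n :=
        Finset.sum_congr rfl fun p _ => htermG p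
      rw [this]
      exact (Summable.tsum_finsetSum fun p _ => hFs p).symm
    rw [hGeq]
    apply tsum_nonneg
    intro n
    have e1 : (∑ k ∈ Finset.range (K+1), c k * (k : ℝ) ^ n)
          * (∑ l ∈ Finset.range (K+1), c l * (l : ℝ) ^ n)
        = ∑ p ∈ P, (c p.1 * (p.1 : ℝ) ^ n) * (c p.2 * (p.2 : ℝ) ^ n) := by
      rw [Finset.sum_mul_sum]
      exact (Finset.sum_product (Finset.range (K+1)) (Finset.range (K+1))
        (fun p : ℕ × ℕ => (c p.1 * (p.1 : ℝ) ^ n) * (c p.2 * (p.2 : ℝ) ^ n))).symm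
    have e2 : ∑ p ∈ P, F p n
        = ((∑ k ∈ Finset.range (K+1), c k * (k : ℝ) ^ n) ^ 2)
            * ((2 * s) ^ n / (Nat.factorial n : ℝ)) := by
      rw [sq, e1, Finset.sum_mul]
    rw [e2]
    have : (0:ℝ) ≤ (2 * s) ^ n / (Nat.factorial n : ℝ) := by positivity
    exact mul_nonneg (sq_nonneg _) this
  -- G is eventually bounded below by a positive constant
  set A : ℝ := ∑ k ∈ Finset.range (K + 1), a k ^ 2 with hA
  have hApos : 0 < A := by
    obtain ⟨k0, hk0, hk0ne⟩ := hne
    have : 0 < a k0 ^ 2 := (sq_nonneg (a k0)).lt_of_ne (Ne.symm (pow_ne_zero 2 hk0ne))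
    exact Finset.sum_pos' (fun k _ => sq_nonneg _) ⟨k0, hk0, this⟩
  set M : ℝ := ∑ p ∈ P, |a p.1 * a p.2| with hM
  have hGlower : ∀ s : ℝ, 0 ≤ s → A - M * Real.exp (-s) ≤ G s := by
    intro s hs
    have hb : ∀ p ∈ P, (if p.1 = p.2 then a p.1 ^ 2 else 0) - |a p.1 * a p.2| * Real.exp (-s)
        ≤ a p.1 * a p.2 * Real.exp (-(((p.1 : ℝ) - (p.2 : ℝ)) ^ 2 * s)) := by
      intro p _
      by_cases h : p.1 = p.2
      · rw [if_pos h, h]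
        simp only [sub_self]
        rw [show ((0:ℝ)) ^ 2 * s = 0 by ring, neg_zero, Real.exp_zero, mul_one]
        have h1' : 0 ≤ |a p.2 * a p.2| * Real.exp (-s) :=
          mul_nonneg (abs_nonneg _) (Real.exp_pos _).le
        rw [abs_mul_self, ← sq]
        nlinarith [mul_nonneg (sq_nonneg (a p.2)) (Real.exp_pos (-s)).le]
      · rw [if_neg h]
        have hd1 : (1:ℝ) ≤ ((p.1 : ℝ) - (p.2 : ℝ)) ^ 2 := by
          have hz : ((p.1 : ℤ) - (p.2 : ℤ)) ≠ 0 :=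
            sub_ne_zero.mpr (by exact_mod_cast h)
          have h1' : (1:ℤ) ≤ |(p.1 : ℤ) - (p.2 : ℤ)| := Int.one_le_abs hz
          have h2' : (1:ℝ) ≤ |(p.1 : ℝ) - (p.2 : ℝ)| := by
            exact_mod_cast h1'
          nlinarith [sq_abs ((p.1 : ℝ) - (p.2 : ℝ)), abs_nonneg ((p.1 : ℝ) - (p.2 : ℝ))]
        have hexple : Real.exp (-(((p.1 : ℝ) - (p.2 : ℝ)) ^ 2 * s)) ≤ Real.exp (-s) :=
          Real.exp_le_exp.mpr (by nlinarith)
        have hmul1 := mul_le_mul_of_nonneg_right (neg_abs_le (a p.1 * a p.2))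
          (Real.exp_pos (-(((p.1 : ℝ) - (p.2 : ℝ)) ^ 2 * s))).le
        have hmul2 := mul_le_mul_of_nonneg_left hexple (abs_nonneg (a p.1 * a p.2))
        linarith
    calc A - M * Real.exp (-s)
        = ∑ p ∈ P, ((if p.1 = p.2 then a p.1 ^ 2 else 0) - |a p.1 * a p.2| * Real.exp (-s)) := by
          rw [Finset.sum_sub_distrib, ← Finset.sum_mul]
          congr 1
          rw [hA, hP, Finset.sum_product]
          exact Finset.sum_congr rfl fun k hk => by
            rw [Finset.sum_ite_eq (Finset.range (K+1)) k (fun _ => a k ^ 2), if_pos hk]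
      _ ≤ ∑ p ∈ P, a p.1 * a p.2 * Real.exp (-(((p.1 : ℝ) - (p.2 : ℝ)) ^ 2 * s)) :=
          Finset.sum_le_sum hb
      _ = G s := rfl
  have hev : ∀ᶠ s in Filter.atTop, M * Real.exp (-s) < A := by
    have ht := Real.tendsto_exp_neg_atTop_nhds_zero.const_mul M
    rw [mul_zero] at ht
    exact ht.eventually_lt_const hApos
  obtain ⟨s₀, hs₀⟩ := Filter.eventually_atTop.mp ((Filter.eventually_ge_atTop (1:ℝ)).and hev)
  -- positivity of the integral
  have hIntPos : 0 < ∫ s in Set.Ioi (0:ℝ), G s * s ^ (-1 - H) := by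
    rw [MeasureTheory.setIntegral_pos_iff_support_of_nonneg_ae _ hGint]
    · have hsub : Set.Ici (max s₀ 1) ⊆
          (Function.support fun s : ℝ => G s * s ^ (-1 - H)) ∩ Set.Ioi 0 := by
        intro s hsmem
        have hs1 : (1:ℝ) ≤ s := le_trans (le_max_right _ _) hsmem
        have hs0' : s₀ ≤ s := le_trans (le_max_left _ _) hsmem
        have hspos : (0:ℝ) < s := lt_of_lt_of_le one_pos hs1
        obtain ⟨-, hlt⟩ := hs₀ s hs0'
        have hGpos : 0 < G s := lt_of_lt_of_le (by linarith) (hGlower s hspos.le)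
        have hrp : 0 < s ^ (-1 - H) := Real.rpow_pos_of_pos hspos _
        exact ⟨Function.mem_support.mpr (ne_of_gt (mul_pos hGpos hrp)), hspos⟩
      calc (0:ENNReal) < ⊤ := ENNReal.zero_lt_top
        _ = volume (Set.Ici (max s₀ 1)) := Real.volume_Ici.symm
        _ ≤ _ := measure_mono hsub
    · filter_upwards [MeasureTheory.ae_restrict_mem measurableSet_Ioi] with s hs
      simp only [Pi.zero_apply]
      exact mul_nonneg (hGnonneg s hs) (Real.rpow_pos_of_pos hs _).le
  by_contra hcon
  push_neg at hcon
  have hge : 0 ≤ S * I := mul_nonneg hcon hIpos.le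
  rw [hSI] at hge
  linarith


end HurstAux

/-- Let `a` be a nonzero zero-sum vector, `a²` its dilation, and `v` a
function with `v(t) = (σ²/2) t^{2H} + o(t^{2H})` as `t → 0⁺`. With
`Q_a(Δ) = Σ_{k,ℓ ≤ K} a_k a_ℓ v(|k-ℓ|Δ)` and `Q_{a²}(Δ) = Σ_{k,ℓ ≤ 2K} a²_k a²_ℓ v(|k-ℓ|Δ)`:
`Q_{a²}(Δ) = Q_a(2Δ)` for all `Δ > 0`, both are nonzero for all small enough `Δ > 0`,
and `(1/2) log₂ (Q_{a²}(Δ)/Q_a(Δ)) → H` as `Δ → 0⁺`. -/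
theorem hurst_estimator_population_identity
    (H sigma : ℝ) (hH : H ∈ Set.Ioo (0 : ℝ) 1) (hsigma : 0 < sigma)
    (K : ℕ) (hK : 1 ≤ K) (a : ℕ → ℝ)
    (hzero : ∑ k ∈ Finset.range (K + 1), a k = 0)
    (hne : ∃ k ∈ Finset.range (K + 1), a k ≠ 0)
    (a2 : ℕ → ℝ) (ha2 : ∀ k : ℕ, a2 k = if k % 2 = 0 then a (k / 2) else 0)
    (v : ℝ → ℝ)
    (hv : (fun t : ℝ => v t - sigma ^ 2 / 2 * t ^ (2 * H))
      =o[nhdsWithin 0 (Set.Ici 0)] (fun t : ℝ => t ^ (2 * H)))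
    (Qa Qa2 : ℝ → ℝ)
    (hQa : ∀ Δ : ℝ, Qa Δ = ∑ k ∈ Finset.range (K + 1), ∑ l ∈ Finset.range (K + 1),
      a k * a l * v (|(k : ℝ) - (l : ℝ)| * Δ))
    (hQa2 : ∀ Δ : ℝ, Qa2 Δ = ∑ k ∈ Finset.range (2 * K + 1), ∑ l ∈ Finset.range (2 * K + 1),
      a2 k * a2 l * v (|(k : ℝ) - (l : ℝ)| * Δ)) :
    (∀ Δ : ℝ, 0 < Δ → Qa2 Δ = Qa (2 * Δ)) ∧
    (∀ᶠ Δ in nhdsWithin (0 : ℝ) (Set.Ioi 0), Qa Δ ≠ 0 ∧ Qa2 Δ ≠ 0) ∧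
    Filter.Tendsto (fun Δ : ℝ => (1 / 2) * Real.logb 2 (Qa2 Δ / Qa Δ))
      (nhdsWithin 0 (Set.Ioi 0)) (nhds H) := by
  obtain ⟨hH0, hH1⟩ := hH
  -- Part 1 : dilation identity
  have houter : ∀ (g : ℕ → ℝ), (∀ k, k % 2 ≠ 0 → g k = 0) →
      ∑ k ∈ Finset.range (2 * K + 1), g k = ∑ j ∈ Finset.range (K + 1), g (2 * j) := by
    intro g hg
    have h1 : ((Finset.range (K+1)).image (fun j => 2*j)) ⊆ Finset.range (2*K+1) := by
      intro x hx
      simp only [Finset.mem_image, Finset.mem_range] at hx ⊢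
      obtain ⟨j, hj, rfl⟩ := hx
      omega
    have h2 : ∀ x ∈ Finset.range (2*K+1),
        x ∉ (Finset.range (K+1)).image (fun j => 2*j) → g x = 0 := by
      intro x hx hnx
      apply hg
      intro hmod
      apply hnx
      simp only [Finset.mem_image, Finset.mem_range] at hx ⊢
      exact ⟨x/2, by omega, by omega⟩
    rw [← Finset.sum_subset h1 h2,
      Finset.sum_image (by intro x _ y _ h; simp only at h; omega)]
  have hdil : ∀ Δ : ℝ, Qa2 Δ = Qa (2 * Δ) := by
    intro Δ
    rw [hQa2 Δ, hQa (2 * Δ)]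
    rw [houter _ (fun k hk => Finset.sum_eq_zero fun l _ => by
      rw [ha2 k, if_neg hk, zero_mul, zero_mul])]
    refine Finset.sum_congr rfl fun j _ => ?_
    rw [houter _ (fun l hl => by
      rw [ha2 l, if_neg hl, mul_zero, zero_mul])]
    refine Finset.sum_congr rfl fun j' _ => ?_
    have ha2j : ∀ m : ℕ, a2 (2 * m) = a m := by
      intro m
      rw [ha2 (2*m)]
      norm_num [Nat.mul_mod_right]
    rw [ha2j j, ha2j j']
    have harg : |((2*j : ℕ) : ℝ) - ((2*j' : ℕ) : ℝ)| * Δ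
        = |(j : ℝ) - (j' : ℝ)| * (2 * Δ) := by
      push_cast
      rw [show 2*(j:ℝ) - 2*(j':ℝ) = 2*((j:ℝ)-(j':ℝ)) by ring, abs_mul, abs_two]
      ring
    rw [harg]
  -- v 0 = 0
  have h2Hne : (2 * H : ℝ) ≠ 0 := by positivity
  have hv0 : v 0 = 0 := by
    have h := hv.def one_pos
    obtain ⟨u, hu, h0u, hsub⟩ := mem_nhdsWithin.mp h
    have h00 := hsub ⟨h0u, Set.self_mem_Ici⟩
    simp only [Set.mem_setOf_eq, Real.zero_rpow h2Hne, mul_zero, norm_zero, sub_zero,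
      Real.norm_eq_abs, abs_zero, one_mul] at h00
    exact abs_eq_zero.mp (le_antisymm h00 (abs_nonneg _))
  -- remainder
  set r : ℝ → ℝ := fun t => v t - sigma ^ 2 / 2 * t ^ (2 * H) with hrdef
  have hr0 : r 0 = 0 := by
    simp only [hrdef, hv0, Real.zero_rpow h2Hne, mul_zero, sub_zero]
  set Sv : ℝ := ∑ k ∈ Finset.range (K + 1), ∑ l ∈ Finset.range (K + 1),
    a k * a l * |(k : ℝ) - (l : ℝ)| ^ (2 * H) with hSvdef
  have hSneg : Sv < 0 := hurst_aux_S_neg hH0 hH1 a hzero hne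
  set C : ℝ := sigma ^ 2 / 2 * Sv with hCdef
  have hCneg : C < 0 := mul_neg_of_pos_of_neg (by positivity) hSneg
  have hCne : C ≠ 0 := ne_of_lt hCneg
  set R : ℝ → ℝ := fun Δ => ∑ k ∈ Finset.range (K + 1), ∑ l ∈ Finset.range (K + 1),
    a k * a l * r (|(k : ℝ) - (l : ℝ)| * Δ) with hRdef
  -- R is little-o of Δ ^ (2H)
  have hR : R =o[nhdsWithin 0 (Set.Ioi 0)] (fun Δ : ℝ => Δ ^ (2 * H)) := by
    rw [hRdef]
    refine Asymptotics.IsLittleO.fun_sum fun k _ => Asymptotics.IsLittleO.fun_sum fun l _ => ?_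
    by_cases hkl : (k : ℝ) = (l : ℝ)
    · have : (fun Δ : ℝ => a k * a l * r (|(k : ℝ) - (l : ℝ)| * Δ))
          = fun _ => (0 : ℝ) := by
        funext Δ
        rw [hkl, sub_self, abs_zero, zero_mul, hr0, mul_zero]
      rw [this]
      exact Asymptotics.isLittleO_zero _ _
    · have hc : 0 < |(k : ℝ) - (l : ℝ)| := abs_pos.mpr (sub_ne_zero.mpr hkl)
      have hmap : Filter.Tendsto (fun Δ : ℝ => |(k : ℝ) - (l : ℝ)| * Δ)
          (nhdsWithin 0 (Set.Ioi 0)) (nhdsWithin 0 (Set.Ici 0)) := by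
        apply tendsto_nhdsWithin_of_tendsto_nhds_of_eventually_within
        · have hcont : Filter.Tendsto (fun Δ : ℝ => |(k : ℝ) - (l : ℝ)| * Δ)
              (nhds 0) (nhds (|(k : ℝ) - (l : ℝ)| * 0)) :=
            (continuous_const.mul continuous_id).tendsto 0
          rw [mul_zero] at hcont
          exact hcont.mono_left nhdsWithin_le_nhds
        · filter_upwards [eventually_mem_nhdsWithin] with Δ hΔ
          exact mul_nonneg hc.le (le_of_lt hΔ)
      have hcomp := hv.comp_tendsto hmap
      simp only [Function.comp_def] at hcomp
      have heq : (fun Δ : ℝ => (|(k : ℝ) - (l : ℝ)| * Δ) ^ (2 * H))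
          =ᶠ[nhdsWithin 0 (Set.Ioi 0)]
          fun Δ : ℝ => |(k : ℝ) - (l : ℝ)| ^ (2 * H) * Δ ^ (2 * H) := by
        filter_upwards [eventually_mem_nhdsWithin] with Δ hΔ
        exact Real.mul_rpow (abs_nonneg _) (le_of_lt hΔ)
      have hO := heq.trans_isBigO
        (Asymptotics.isBigO_const_mul_self (|(k : ℝ) - (l : ℝ)| ^ (2 * H))
          (fun Δ : ℝ => Δ ^ (2 * H)) (nhdsWithin 0 (Set.Ioi 0)))
      exact (hcomp.trans_isBigO hO).const_mul_left _
  -- split Qa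
  have hsplit : ∀ Δ : ℝ, 0 < Δ → Qa Δ = C * Δ ^ (2 * H) + R Δ := by
    intro Δ hΔ
    have hterm : ∀ k l : ℕ, a k * a l * v (|(k : ℝ) - (l : ℝ)| * Δ)
        = sigma ^ 2 / 2 * Δ ^ (2 * H) * (a k * a l * |(k : ℝ) - (l : ℝ)| ^ (2 * H))
          + a k * a l * r (|(k : ℝ) - (l : ℝ)| * Δ) := by
      intro k l
      have hvv : v (|(k : ℝ) - (l : ℝ)| * Δ)
          = sigma ^ 2 / 2 * (|(k : ℝ) - (l : ℝ)| * Δ) ^ (2 * H)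
            + r (|(k : ℝ) - (l : ℝ)| * Δ) := by
        simp only [hrdef]
        ring
      rw [hvv, Real.mul_rpow (abs_nonneg _) hΔ.le]
      ring
    rw [hQa Δ]
    calc ∑ k ∈ Finset.range (K + 1), ∑ l ∈ Finset.range (K + 1),
          a k * a l * v (|(k : ℝ) - (l : ℝ)| * Δ)
        = ∑ k ∈ Finset.range (K + 1), ∑ l ∈ Finset.range (K + 1),
          (sigma ^ 2 / 2 * Δ ^ (2 * H) * (a k * a l * |(k : ℝ) - (l : ℝ)| ^ (2 * H))
            + a k * a l * r (|(k : ℝ) - (l : ℝ)| * Δ)) :=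
          Finset.sum_congr rfl fun k _ => Finset.sum_congr rfl fun l _ => hterm k l
      _ = C * Δ ^ (2 * H) + R Δ := by
          simp only [Finset.sum_add_distrib, ← Finset.mul_sum]
          rw [hCdef, hRdef]
          ring
  -- the normalized quantity tends to C
  have hf : Filter.Tendsto (fun Δ : ℝ => Qa Δ / Δ ^ (2 * H))
      (nhdsWithin 0 (Set.Ioi 0)) (nhds C) := by
    have h1 : Filter.Tendsto (fun Δ : ℝ => C + R Δ / Δ ^ (2 * H))
        (nhdsWithin 0 (Set.Ioi 0)) (nhds (C + 0)) :=
      tendsto_const_nhds.add hR.tendsto_div_nhds_zero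
    rw [add_zero] at h1
    apply h1.congr'
    filter_upwards [eventually_mem_nhdsWithin] with Δ hΔ
    have hΔne : (Δ : ℝ) ^ (2 * H) ≠ 0 := (Real.rpow_pos_of_pos hΔ (2 * H)).ne'
    rw [hsplit Δ hΔ, add_div, mul_div_cancel_right₀ _ hΔne]
  have hfne : ∀ᶠ Δ in nhdsWithin (0:ℝ) (Set.Ioi 0), Qa Δ / Δ ^ (2 * H) ≠ 0 :=
    hf.eventually_ne hCne
  have hQane : ∀ᶠ Δ in nhdsWithin (0:ℝ) (Set.Ioi 0), Qa Δ ≠ 0 := by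
    filter_upwards [hfne] with Δ h1
    intro h
    exact h1 (by rw [h, zero_div])
  have h2map : Filter.Tendsto (fun Δ : ℝ => 2 * Δ)
      (nhdsWithin 0 (Set.Ioi 0)) (nhdsWithin 0 (Set.Ioi 0)) := by
    apply tendsto_nhdsWithin_of_tendsto_nhds_of_eventually_within
    · have hcont : Filter.Tendsto (fun Δ : ℝ => 2 * Δ) (nhds 0) (nhds (2 * 0)) :=
        (continuous_const.mul continuous_id).tendsto 0
      rw [mul_zero] at hcont
      exact hcont.mono_left nhdsWithin_le_nhds
    · filter_upwards [eventually_mem_nhdsWithin] with Δ hΔ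
      have : (0:ℝ) < Δ := hΔ
      exact Set.mem_Ioi.mpr (by linarith)
  have hQa2ne : ∀ᶠ Δ in nhdsWithin (0:ℝ) (Set.Ioi 0), Qa2 Δ ≠ 0 := by
    filter_upwards [h2map.eventually hQane] with Δ h
    rw [hdil Δ]
    exact h
  refine ⟨fun Δ _ => hdil Δ, hQane.and hQa2ne, ?_⟩
  -- Part 3 : the limit
  have hfc : Filter.Tendsto (fun Δ : ℝ => Qa (2 * Δ) / (2 * Δ) ^ (2 * H))
      (nhdsWithin 0 (Set.Ioi 0)) (nhds C) := hf.comp h2map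
  have hdiv := hfc.div hf hCne
  rw [div_self hCne] at hdiv
  have hratio : Filter.Tendsto (fun Δ : ℝ => Qa2 Δ / Qa Δ)
      (nhdsWithin 0 (Set.Ioi 0)) (nhds ((2:ℝ) ^ (2 * H))) := by
    have h3 := hdiv.mul_const ((2:ℝ) ^ (2 * H))
    rw [one_mul] at h3
    apply h3.congr'
    filter_upwards [eventually_mem_nhdsWithin, hQane] with Δ hΔ hQ
    have h2Δ : ((2 * Δ : ℝ)) ^ (2 * H) = (2:ℝ) ^ (2 * H) * Δ ^ (2 * H) :=
      Real.mul_rpow (by norm_num) (le_of_lt hΔ)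
    have hΔne : (Δ : ℝ) ^ (2 * H) ≠ 0 := (Real.rpow_pos_of_pos hΔ (2 * H)).ne'
    have h2ne : ((2:ℝ)) ^ (2 * H) ≠ 0 := (Real.rpow_pos_of_pos two_pos (2 * H)).ne'
    simp only [Pi.div_apply]
    rw [hdil Δ, h2Δ]
    field_simp
  have hlog2ne : Real.log 2 ≠ 0 := (Real.log_pos one_lt_two).ne'
  have hlog : Filter.Tendsto (fun Δ : ℝ => Real.logb 2 (Qa2 Δ / Qa Δ))
      (nhdsWithin 0 (Set.Ioi 0)) (nhds (2 * H)) := by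
    have h4 := (hratio.log (Real.rpow_pos_of_pos two_pos (2 * H)).ne').div_const (Real.log 2)
    simp only [Real.logb]
    have hval : Real.log ((2:ℝ) ^ (2 * H)) / Real.log 2 = 2 * H := by
      rw [Real.log_rpow two_pos, mul_div_assoc, div_self hlog2ne, mul_one]
    rw [← hval]
    exact h4
  have hfin := hlog.const_mul (1/2 : ℝ)
  rw [show (1/2 : ℝ) * (2 * H) = H by ring] at hfin
  exact hfin
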